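/- Let ℓ, v₀, v_r, δ, T > 0, let κ : ℝ → ℝ be continuously differentiable, T-periodic, and positive, and set 𝒦 := −2i·v_r²·δ/(ℓ·v₀). If c : ℝ → ℂ is twice differentiable and satisfies the capacitance ODE (2/v₀)·c'(t) + (ℓ/(δ·v_r²))·(d/dt)(c'(t)/κ(t)) = 0 for all t ∈ ℝ, then c'(T) = exp(−i·ω₁·T)·c'(0), where ω₁ := (𝒦/T)·∫₀ᵀ κ(t) dt. In other words, the Floquet quasifrequency of the non-constant solutions of the single-resonator capacitance ODE equals (𝒦/T)·∫₀ᵀ κ(t) dt. -/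

import Mathlib

/-- **Floquet quasifrequency of the single-resonator capacitance ODE.**
If `c` is twice differentiable and satisfies
`(2/v₀)·c'(t) + (ℓ/(δ·v_r²))·(d/dt)(c'(t)/κ(t)) = 0` with `κ` a `C¹`, `T`-periodic,
positive modulation, then `c'(T) = exp(−i·ω₁·T)·c'(0)` where
`ω₁ = (𝒦/T)·∫₀ᵀ κ` and `𝒦 = −2i·v_r²·δ/(ℓ·v₀)`. -/
theorem floquet_quasifrequency_single_resonator
    (ℓ v₀ vr δ T : ℝ) (hℓ : 0 < ℓ) (hv₀ : 0 < v₀) (hvr : 0 < vr)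
    (hδ : 0 < δ) (hT : 0 < T)
    (κ : ℝ → ℝ) (hκ : ContDiff ℝ 1 κ) (hper : ∀ t, κ (t + T) = κ t)
    (hpos : ∀ t, 0 < κ t)
    (c : ℝ → ℂ) (hc : Differentiable ℝ c) (hc' : Differentiable ℝ (deriv c))
    (hode : ∀ t, (2 / (v₀ : ℂ)) * deriv c t
        + ((ℓ : ℂ) / ((δ : ℂ) * (vr : ℂ) ^ 2)) *
            deriv (fun s => deriv c s / (κ s : ℂ)) t = 0) :
    deriv c T
      = Complex.exp (-Complex.I *
          (((-2 * Complex.I * (vr : ℂ) ^ 2 * (δ : ℂ) / ((ℓ : ℂ) * (v₀ : ℂ))) / (T : ℂ))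
            * ((∫ t in (0:ℝ)..T, κ t : ℝ) : ℂ)) * (T : ℂ)) * deriv c 0 := by
  have hℓ' : (ℓ : ℂ) ≠ 0 := by exact_mod_cast hℓ.ne'
  have hv₀' : (v₀ : ℂ) ≠ 0 := by exact_mod_cast hv₀.ne'
  have hvr' : (vr : ℂ) ≠ 0 := by exact_mod_cast hvr.ne'
  have hδ' : (δ : ℂ) ≠ 0 := by exact_mod_cast hδ.ne'
  have hT' : (T : ℂ) ≠ 0 := by exact_mod_cast hT.ne'
  have hκ' : ∀ t, ((κ t : ℂ)) ≠ 0 := fun t => by exact_mod_cast (hpos t).ne'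
  set α : ℂ := -2 * δ * vr ^ 2 / (ℓ * v₀) with hα
  set F : ℝ → ℂ := fun t => deriv c t / (κ t : ℂ) with hF
  have hKd : Differentiable ℝ (fun t : ℝ => ((κ t : ℂ))) :=
    fun t => ((hκ.differentiable one_ne_zero t).hasDerivAt.ofReal_comp).differentiableAt
  have hFd : Differentiable ℝ F := hc'.div hKd hκ'
  -- deriv F t = α * deriv c t
  have hDF : ∀ t, deriv F t = α * deriv c t := by
    intro t
    have h := hode t
    rw [hα]
    field_simp at h ⊢
    linear_combination h
  -- the integral function
  set J : ℝ → ℝ := fun t => ∫ s in (0:ℝ)..t, κ s with hJ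
  have hJd : ∀ t, HasDerivAt J (κ t) t := fun t =>
    (hκ.continuous.integral_hasStrictDerivAt 0 t).hasDerivAt
  set E : ℝ → ℂ := fun t => Complex.exp (-α * (J t : ℂ)) with hE
  have hEd : ∀ t, HasDerivAt E (-α * (κ t : ℂ) * E t) t := by
    intro t
    have h1 : HasDerivAt (fun u : ℝ => ((J u : ℝ) : ℂ)) ((κ t : ℂ)) t :=
      (hJd t).ofReal_comp
    have h2 : HasDerivAt (fun u : ℝ => -α * ((J u : ℝ) : ℂ)) (-α * (κ t : ℂ)) t :=
      h1.const_mul (-α)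
    simpa [hE, mul_comm] using h2.cexp
  set g : ℝ → ℂ := fun t => F t * E t with hg
  have hgd : ∀ t, HasDerivAt g 0 t := by
    intro t
    have h := ((hFd t).hasDerivAt.mul (hEd t))
    have hcF : deriv c t = F t * (κ t : ℂ) := by
      rw [hF]; exact (div_mul_cancel₀ _ (hκ' t)).symm
    have h0 : deriv F t * E t + F t * (-α * (κ t : ℂ) * E t) = 0 := by
      rw [hDF t, hcF]; ring
    rw [h0] at h
    exact h
  have hgdiff : Differentiable ℝ g := fun t => (hgd t).differentiableAt
  have hconst : g T = g 0 :=
    is_const_of_deriv_eq_zero hgdiff (fun t => (hgd t).deriv) T 0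
  have hJ0 : J 0 = 0 := by simp [hJ]
  have hκT : κ T = κ 0 := by simpa using hper 0
  -- from hconst : F T * exp(-α J T) = F 0
  have hFT : F T = F 0 * Complex.exp (α * (J T : ℂ)) := by
    have h0 : E 0 = 1 := by simp [hE, hJ0]
    have h1 : F T * E T = F 0 := by
      have := hconst
      rw [hg] at this
      simpa [h0] using this
    have hET : E T * Complex.exp (α * (J T : ℂ)) = 1 := by
      rw [hE, ← Complex.exp_add, neg_mul, neg_add_cancel, Complex.exp_zero]
    calc F T = F T * (E T * Complex.exp (α * (J T : ℂ))) := by rw [hET, mul_one]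
      _ = (F T * E T) * Complex.exp (α * (J T : ℂ)) := by ring
      _ = F 0 * Complex.exp (α * (J T : ℂ)) := by rw [h1]
  have hmain : deriv c T = Complex.exp (α * (J T : ℂ)) * deriv c 0 := by
    have e1 : deriv c T = F T * (κ T : ℂ) := by
      rw [hF]; exact (div_mul_cancel₀ _ (hκ' T)).symm
    have e2 : deriv c 0 = F 0 * (κ 0 : ℂ) := by
      rw [hF]; exact (div_mul_cancel₀ _ (hκ' 0)).symm
    rw [e1, e2, hFT, hκT]; ring
  rw [hmain]
  congr 1
  congr 1
  rw [hα]
  field_simp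
  ring_nf
  rw [Complex.I_sq]
  ring
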